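/- arXiv:2106.16218 — 2 statements merged into one kernel-verified Lean document; each statement's English description precedes it below -/
import Mathlib

section
/- Let B and B' be distinct blocks of a connected graph G. Then neither B ⊆ B' nor B' ⊆ B, and moreover |B ∩ B'| ≤ 2. -/
open SimpleGraph

attribute [local instance] Classical.propDecidable

/-- `compNbrs G X C` is the set `N_G(C)` of neighbours (necessarily in `X`) of
the connected component `C` of `G - X`. -/
def compNbrs {V : Type} (G : SimpleGraph V) (X : Set V)
    (C : (G.induce (Xᶜ : Set V)).ConnectedComponent) : Set V :=
  {x | x ∈ X ∧ ∃ y : (Xᶜ : Set V),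
    (G.induce (Xᶜ : Set V)).connectedComponentMk y = C ∧ G.Adj x ↑y}

/-- The torso `G⟦X⟧` of a vertex set `X`: its vertex set is `X`, and distinct
`v, w ∈ X` are adjacent if `vw ∈ E(G)` or `v, w ∈ N_G(C)` for some connected
component `C` of `G - X`. -/
def torso {V : Type} (G : SimpleGraph V) (X : Set V) : SimpleGraph X where
  Adj v w := v ≠ w ∧ (G.Adj ↑v ↑w ∨
    ∃ C, (↑v : V) ∈ compNbrs G X C ∧ (↑w : V) ∈ compNbrs G X C)
  symm := ⟨by
    rintro a b ⟨hab, h | ⟨C, h1, h2⟩⟩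
    · exact ⟨hab.symm, Or.inl h.symm⟩
    · exact ⟨hab.symm, Or.inr ⟨C, h2, h1⟩⟩⟩
  loopless := ⟨by rintro a ⟨h, -⟩; exact h rfl⟩

/-- `X` has adhesion at most `k` in `G` if `|N_G(C)| ≤ k` for every connected
component `C` of `G - X`. -/
def adhesionLE {V : Type} (G : SimpleGraph V) (X : Set V) (k : ℕ) : Prop :=
  ∀ C, (compNbrs G X C).ncard ≤ k

/-- A graph is `k`-connected if it has more than `k` vertices and removing any
set of at most `k - 1` vertices leaves it connected. -/
def IsKConnected {V : Type} [Fintype V] (k : ℕ) (G : SimpleGraph V) : Prop :=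
  k < Fintype.card V ∧ ∀ S : Set V, S.ncard ≤ k - 1 → (G.induce (Sᶜ : Set V)).Connected

/-- A proper block of `G`: a set of vertices whose torso is 3-connected and
whose adhesion is at most 2. -/
def IsProperBlock {V : Type} [Fintype V] (G : SimpleGraph V) (B : Set V) : Prop :=
  IsKConnected 3 (torso G B) ∧ adhesionLE G B 2

/-- A block of `G`: a set `B` of vertices such that either the torso `G⟦B⟧` is
3-connected and `B` has adhesion at most 2, or `G⟦B⟧` is a complete graph of
order 3 and `B` has adhesion at most 2, or `G⟦B⟧` is a complete graph of order
2 and `B` has adhesion at most 1. -/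
def IsBlock {V : Type} [Fintype V] (G : SimpleGraph V) (B : Set V) : Prop :=
  (IsKConnected 3 (torso G B) ∧ adhesionLE G B 2) ∨
  (B.ncard = 3 ∧ torso G B = ⊤ ∧ adhesionLE G B 2) ∨
  (B.ncard = 2 ∧ torso G B = ⊤ ∧ adhesionLE G B 1)

section Aux

variable {V : Type} (G : SimpleGraph V)

/-- `c` lies in the component `C` of `G - B`. -/
def inComp (B : Set V) (C : (G.induce (Bᶜ : Set V)).ConnectedComponent) (c : V) : Prop :=
  ∃ h : c ∈ (Bᶜ : Set V), (G.induce (Bᶜ : Set V)).connectedComponentMk ⟨c, h⟩ = C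

lemma nbr_of_inComp {B : Set V} {C} {c z : V} (h : inComp G B C c) (hadj : G.Adj c z) :
    inComp G B C z ∨ z ∈ compNbrs G B C := by
  obtain ⟨hc, hC⟩ := h
  by_cases hz : z ∈ B
  · exact Or.inr ⟨hz, ⟨c, hc⟩, hC, hadj.symm⟩
  · have hz' : z ∈ (Bᶜ : Set V) := hz
    refine Or.inl ⟨hz', ?_⟩
    refine Eq.trans ?_ hC
    refine (SimpleGraph.ConnectedComponent.eq).mpr ?_
    refine SimpleGraph.Adj.reachable ?_
    show (G.comap _).Adj _ _
    simpa using hadj.symm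

lemma walk_stay {B B' : Set V} {C} :
    ∀ {y z : ↥(B'ᶜ : Set V)} (_ : (G.induce (B'ᶜ : Set V)).Walk y z),
      inComp G B C ↑y →
      (∀ n : ↥(B'ᶜ : Set V), (↑n : V) ∈ compNbrs G B C →
        (G.induce (B'ᶜ : Set V)).connectedComponentMk n ≠
          (G.induce (B'ᶜ : Set V)).connectedComponentMk y) →
      inComp G B C ↑z := by
  intro y z p
  induction p with
  | nil => exact fun h _ => h
  | @cons u v w h q ih =>
    intro hu hN
    have hadj : G.Adj ↑u ↑v := by
      have := h
      simp only [SimpleGraph.comap_adj] at this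
      exact this
    have hmk : (G.induce (B'ᶜ : Set V)).connectedComponentMk v =
        (G.induce (B'ᶜ : Set V)).connectedComponentMk u :=
      (SimpleGraph.ConnectedComponent.eq).mpr h.symm.reachable
    rcases nbr_of_inComp G hu hadj with hv | hv
    · refine ih hv ?_
      intro n hn
      rw [hmk]
      exact hN n hn
    · exact absurd hmk (hN v hv)

/-- Extra deletion set coming from the component of `G - B'` containing `n`. -/
def delSet (B B' : Set V) (C : (G.induce (Bᶜ : Set V)).ConnectedComponent) (n : V) : Set V :=
  {z | ¬ inComp G B C z ∧ ∃ h : n ∈ (B'ᶜ : Set V),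
    z ∈ compNbrs G B' ((G.induce (B'ᶜ : Set V)).connectedComponentMk ⟨n, h⟩) ∧
    ∃ c, inComp G B C c ∧
      c ∈ compNbrs G B' ((G.induce (B'ᶜ : Set V)).connectedComponentMk ⟨n, h⟩)}

/-- The separating set: `N ∩ B'` plus at most one extra vertex per element of `N - B'`. -/
def Sv (B B' : Set V) (C : (G.induce (Bᶜ : Set V)).ConnectedComponent) : Set V :=
  (compNbrs G B C ∩ B') ∪ ⋃ n ∈ compNbrs G B C, delSet G B B' C n

lemma no_bridge {B B' : Set V} {C} (hadh' : adhesionLE G B' 2)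
    {a b : ↥B'} (haC : inComp G B C ↑a) (hbC : ¬ inComp G B C ↑b)
    (hbN : (↑b : V) ∉ compNbrs G B C) (hbS : (↑b : V) ∉ Sv G B B' C) :
    ¬ (torso G B').Adj a b := by
  rintro ⟨hne, hadj | ⟨E, haE, hbE⟩⟩
  · rcases nbr_of_inComp G haC hadj with h | h
    · exact hbC h
    · exact hbN h
  · by_cases hcase : ∃ n : ↥(B'ᶜ : Set V), (↑n : V) ∈ compNbrs G B C ∧
        (G.induce (B'ᶜ : Set V)).connectedComponentMk n = E
    · obtain ⟨n, hnN, hnE⟩ := hcase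
      apply hbS
      refine Or.inr (Set.mem_biUnion hnN ?_)
      have hmk : (G.induce (B'ᶜ : Set V)).connectedComponentMk ⟨(↑n : V), n.2⟩ = E := hnE
      exact ⟨hbC, n.2, by rw [hmk]; exact hbE, ⟨↑a, haC, by rw [hmk]; exact haE⟩⟩
    · obtain ⟨haB', ya, hyaE, haya⟩ := haE
      obtain ⟨hbB', yb, hybE, hbyb⟩ := hbE
      have hya : inComp G B C ↑ya := by
        rcases nbr_of_inComp G haC haya with h | h
        · exact h
        · exact absurd ⟨ya, h, hyaE⟩ hcase
      obtain ⟨p⟩ := (SimpleGraph.ConnectedComponent.eq).mp (hyaE.trans hybE.symm)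
      have hyb := walk_stay G p hya (fun n hn hmk => hcase ⟨n, hn, hmk.trans hyaE⟩)
      rcases nbr_of_inComp G hyb hbyb.symm with h | h
      · exact hbC h
      · exact hbN h

lemma no_reach {B B' : Set V} {C} (hadh' : adhesionLE G B' 2) {a b : ↥B'}
    (haC : inComp G B C ↑a) (hbC : ¬ inComp G B C ↑b)
    (haS : (↑a : V) ∉ Sv G B B' C) (hbS : (↑b : V) ∉ Sv G B B' C)
    (h : ((torso G B').induce ({x : ↥B' | (↑x : V) ∈ Sv G B B' C}ᶜ)).Reachable
      ⟨a, haS⟩ ⟨b, hbS⟩) : False := by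
  obtain ⟨p⟩ := h
  have main : ∀ {x y : ↥({x : ↥B' | (↑x : V) ∈ Sv G B B' C}ᶜ)}
      (_ : ((torso G B').induce ({x : ↥B' | (↑x : V) ∈ Sv G B B' C}ᶜ)).Walk x y),
      inComp G B C (↑(↑x : ↥B')) → inComp G B C (↑(↑y : ↥B')) := by
    intro x y p
    induction p with
    | nil => exact id
    | @cons u v w h q ih =>
      intro hu
      apply ih
      by_contra hv
      have hvS : (↑(↑v : ↥B') : V) ∉ Sv G B B' C := v.2
      have hvN : (↑(↑v : ↥B') : V) ∉ compNbrs G B C :=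
        fun hN => hvS (Or.inl ⟨hN, (↑v : ↥B').2⟩)
      have hadj : (torso G B').Adj ↑u ↑v := by
        have := h
        simp only [SimpleGraph.comap_adj] at this
        exact this
      exact no_bridge G hadh' hu hv hvN hvS hadj
  exact hbC (main p haC)

lemma adhesion2 {B : Set V} [Fintype V] (hB : IsBlock G B) : adhesionLE G B 2 := by
  rcases hB with ⟨_, h⟩ | ⟨_, _, h⟩ | ⟨_, _, h⟩
  · exact h
  · exact h
  · exact fun C => le_trans (h C) one_le_two

lemma blockN_lt {B : Set V} [Fintype V] (hB : IsBlock G B) (C) :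
    (compNbrs G B C).ncard < B.ncard := by
  rcases hB with ⟨⟨h3, _⟩, hadh⟩ | ⟨h3, _, hadh⟩ | ⟨h2, _, hadh⟩
  · have hcard : B.ncard = Fintype.card ↥B := by
      rw [← Nat.card_coe_set_eq, Nat.card_eq_fintype_card]
    have := hadh C
    omega
  · have := hadh C; omega
  · have := hadh C; omega

lemma subset_pair [Finite V] [Nonempty V] (s : Set V) (h : s.ncard ≤ 2) : ∃ x y : V, s ⊆ {x, y} := by
  rcases s.eq_empty_or_nonempty with rfl | ⟨x, hx⟩
  · exact ⟨Classical.arbitrary V, Classical.arbitrary V, by simp⟩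
  by_cases hs : ∀ z ∈ s, z = x
  · exact ⟨x, x, fun z hz => by simp [hs z hz]⟩
  push_neg at hs
  obtain ⟨y, hy, hyx⟩ := hs
  refine ⟨x, y, fun z hz => ?_⟩
  by_contra hzxy
  simp only [Set.mem_insert_iff, Set.mem_singleton_iff, not_or] at hzxy
  have h3 : ({x, y, z} : Set V).ncard = 3 := by
    rw [Set.ncard_insert_of_notMem (by simp [Ne.symm hyx, Ne.symm hzxy.1]) (Set.toFinite _),
      Set.ncard_pair (Ne.symm hzxy.2)]
  have hsub : ({x, y, z} : Set V) ⊆ s := by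
    intro u hu
    rcases hu with rfl | rfl | rfl
    · exact hx
    · exact hy
    · exact hz
  have := Set.ncard_le_ncard hsub (Set.toFinite _)
  omega

lemma delSet_card [Finite V] {B B' : Set V} {C} (hadh' : adhesionLE G B' 2) (n : V) :
    (delSet G B B' C n).ncard ≤ 1 := by
  rw [Set.ncard_le_one (Set.toFinite _)]
  rintro z1 ⟨hz1C, h1, hz1F, c, hcC, hcF⟩ z2 ⟨hz2C, h2, hz2F, c2, hc2C, hc2F⟩
  by_contra hz
  set E := (G.induce (B'ᶜ : Set V)).connectedComponentMk ⟨n, h1⟩ with hE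
  have hz2F' : z2 ∈ compNbrs G B' E := hz2F
  have hcz1 : c ≠ z1 := fun h => hz1C (h ▸ hcC)
  have hcz2 : c ≠ z2 := fun h => hz2C (h ▸ hcC)
  have h3 : ({c, z1, z2} : Set V).ncard = 3 := by
    rw [Set.ncard_insert_of_notMem (by simp [hcz1, hcz2]) (Set.toFinite _),
      Set.ncard_pair hz]
  have hsub : ({c, z1, z2} : Set V) ⊆ compNbrs G B' E := by
    intro u hu
    rcases hu with rfl | rfl | rfl
    · exact hcF
    · exact hz1F
    · exact hz2F'
  have := Set.ncard_le_ncard hsub (Set.toFinite _)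
  have := hadh' E
  omega

lemma Sv_card [Finite V] {B B' : Set V} {C} [Nonempty V]
    (hN2 : (compNbrs G B C).ncard ≤ 2) (hadh' : adhesionLE G B' 2) :
    (Sv G B B' C).ncard ≤ 2 := by
  obtain ⟨x, y, hxy⟩ := subset_pair (compNbrs G B C) hN2
  set T : V → Set V := fun n =>
    ((compNbrs G B C ∩ B') ∩ {n}) ∪ delSet G B B' C n with hT
  have hTcard : ∀ n, (T n).ncard ≤ 1 := by
    intro n
    by_cases hn : n ∈ B'
    · have hdel : delSet G B B' C n = ∅ := by
        ext z
        simp only [delSet, Set.mem_setOf_eq, Set.mem_empty_iff_false, iff_false, not_and]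
        rintro _ ⟨hc, _⟩
        exact hc hn
      have : T n ⊆ {n} := by
        rw [hT]
        simp only [hdel]
        intro z hz
        rcases hz with ⟨_, hz⟩ | hz
        · exact hz
        · exact absurd hz (by simp)
      calc (T n).ncard ≤ ({n} : Set V).ncard := Set.ncard_le_ncard this (Set.toFinite _)
        _ = 1 := Set.ncard_singleton n
    · have : T n ⊆ delSet G B B' C n := by
        intro z hz
        rcases hz with ⟨⟨_, hz2⟩, hz3⟩ | hz
        · exact absurd (hz3 ▸ hz2) hn
        · exact hz
      exact le_trans (Set.ncard_le_ncard this (Set.toFinite _)) (delSet_card G hadh' n)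
  have hsub : Sv G B B' C ⊆ T x ∪ T y := by
    rintro z (⟨hzN, hzB'⟩ | hz)
    · rcases hxy hzN with rfl | rfl
      · exact Or.inl (Or.inl ⟨⟨hzN, hzB'⟩, rfl⟩)
      · exact Or.inr (Or.inl ⟨⟨hzN, hzB'⟩, rfl⟩)
    · simp only [Set.mem_iUnion] at hz
      obtain ⟨n, hn, hd⟩ := hz
      rcases hxy hn with rfl | rfl
      · exact Or.inl (Or.inr hd)
      · exact Or.inr (Or.inr hd)
  calc (Sv G B B' C).ncard ≤ (T x ∪ T y).ncard := Set.ncard_le_ncard hsub (Set.toFinite _)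
    _ ≤ (T x).ncard + (T y).ncard := Set.ncard_union_le _ _
    _ ≤ 2 := by have := hTcard x; have := hTcard y; omega

lemma key_contra {B B' : Set V} [Fintype V] (hB : IsBlock G B) (hB' : IsBlock G B') {C}
    {v w : V} (hv : v ∈ B') (hw : w ∈ B') (hvC : inComp G B C v)
    (hvS : v ∉ Sv G B B' C) (hwC : ¬ inComp G B C w)
    (hwN : w ∉ compNbrs G B C) (hwS : w ∉ Sv G B B' C) : False := by
  have : Nonempty V := ⟨v⟩
  have hadh' : adhesionLE G B' 2 := adhesion2 G hB'
  have hvw : v ≠ w := fun h => hwC (h ▸ hvC)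
  have hSv2 : (Sv G B B' C).ncard ≤ 2 := Sv_card G (adhesion2 G hB C) hadh'
  rcases hB' with ⟨⟨_, hconn⟩, _⟩ | ⟨_, htorso, _⟩ | ⟨_, htorso, _⟩
  · have hcard : ({x : ↥B' | (↑x : V) ∈ Sv G B B' C}).ncard ≤ 3 - 1 := by
      have h1 : ({x : ↥B' | (↑x : V) ∈ Sv G B B' C}).ncard ≤ (Sv G B B' C).ncard :=
        Set.ncard_le_ncard_of_injOn (fun x => (↑x : V)) (fun x hx => hx)
          (Subtype.val_injective.injOn) (Set.toFinite _)
      omega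
    have hreach := (hconn _ hcard).preconnected ⟨⟨v, hv⟩, hvS⟩ ⟨⟨w, hw⟩, hwS⟩
    exact no_reach G hadh' hvC hwC hvS hwS hreach
  all_goals {
    have hadj : (torso G B').Adj ⟨v, hv⟩ ⟨w, hw⟩ := by
      rw [htorso]
      exact fun h => hvw (congrArg Subtype.val h)
    exact no_bridge G hadh' hvC hwC hwN hwS hadj }

lemma not_subset_block {B B' : Set V} [Fintype V]
    (hB : IsBlock G B) (hB' : IsBlock G B') (hne : B ≠ B') : ¬ B ⊆ B' := by
  intro hsub
  obtain ⟨v, hvB', hvB⟩ := Set.exists_of_ssubset (HasSubset.Subset.ssubset_of_ne hsub hne)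
  have hv : v ∈ (Bᶜ : Set V) := hvB
  set C := (G.induce (Bᶜ : Set V)).connectedComponentMk ⟨v, hv⟩ with hC
  have hvC : inComp G B C v := ⟨hv, rfl⟩
  have hNB : compNbrs G B C ⊆ B := fun x hx => hx.1
  have hlt := blockN_lt G hB C
  have hnsub : ¬ B ⊆ compNbrs G B C := fun h => by
    have := Set.ncard_le_ncard h (Set.toFinite _); omega
  obtain ⟨w, hwB, hwN⟩ := Set.not_subset.mp hnsub
  have hwC : ¬ inComp G B C w := fun h => h.1 hwB
  have hvS : v ∉ Sv G B B' C := by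
    rintro (⟨hN, _⟩ | hD)
    · exact hvB (hNB hN)
    · simp only [Set.mem_iUnion] at hD
      obtain ⟨n, hn, hd⟩ := hD
      exact hd.1 hvC
  have hwS : w ∉ Sv G B B' C := by
    rintro (⟨hN, _⟩ | hD)
    · exact hwN hN
    · simp only [Set.mem_iUnion] at hD
      obtain ⟨n, hn, ⟨_, hnc, _⟩⟩ := hD
      exact hnc (hsub (hNB hn))
  exact key_contra G hB hB' hvB' (hsub hwB) hvC hvS hwC hwN hwS

end Aux

/-- Distinct blocks of a connected graph are incomparable and intersect in at
most 2 vertices. -/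
theorem blocks_incomparable {V : Type} [Fintype V] (G : SimpleGraph V)
    (hG : G.Connected) (B B' : Set V) (hB : IsBlock G B) (hB' : IsBlock G B')
    (hne : B ≠ B') :
    ¬ B ⊆ B' ∧ ¬ B' ⊆ B ∧ (B ∩ B').ncard ≤ 2 := by
  have h12 := not_subset_block G hB hB' hne
  have h21 := not_subset_block G hB' hB hne.symm
  refine ⟨h12, h21, ?_⟩
  by_contra hcard
  push_neg at hcard
  obtain ⟨v, hvB', hvB⟩ := Set.not_subset.mp h21
  have hv : v ∈ (Bᶜ : Set V) := hvB
  set C := (G.induce (Bᶜ : Set V)).connectedComponentMk ⟨v, hv⟩ with hC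
  have hvC : inComp G B C v := ⟨hv, rfl⟩
  have hNB : compNbrs G B C ⊆ B := fun x hx => hx.1
  have hvS : v ∉ Sv G B B' C := by
    rintro (⟨hN, _⟩ | hD)
    · exact hvB (hNB hN)
    · simp only [Set.mem_iUnion] at hD
      obtain ⟨n, hn, hd⟩ := hD
      exact hd.1 hvC
  have : Nonempty V := ⟨v⟩
  have hSv2 : (Sv G B B' C).ncard ≤ 2 := Sv_card G (adhesion2 G hB C) (adhesion2 G hB')
  have hnsub : ¬ (B ∩ B') ⊆ Sv G B B' C := fun h => by
    have := Set.ncard_le_ncard h (Set.toFinite _); omega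
  obtain ⟨w, hwBB', hwS⟩ := Set.not_subset.mp hnsub
  have hwN : w ∉ compNbrs G B C := fun hN => hwS (Or.inl ⟨hN, hwBB'.2⟩)
  have hwC : ¬ inComp G B C w := fun h => h.1 hwBB'.1
  exact key_contra G hB hB' hvB' hwBB'.2 hvC hvS hwC hwN hwS
end

section
/- Let G be a graph, B a proper block of G, and b₁,b₂,b₃ ∈ B pairwise distinct. Then B equals the set of all v ∈ V(G) such that no set S ⊆ V(G) \ {v} of cardinality at most 2 separates v from {b₁,b₂,b₃}. -/
open SimpleGraph

attribute [local instance] Classical.propDecidable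

/-- `S` separates `v` from a set `X`: `v ∉ S` and no vertex of `X \ S` is
reachable from `v` in `G - S`. -/
def SeparatesFrom {V : Type} (G : SimpleGraph V) (S : Set V) (v : V) (X : Set V) : Prop :=
  ∃ hv : v ∈ (Sᶜ : Set V), ∀ x ∈ X, ∀ hx : x ∈ (Sᶜ : Set V),
    ¬ (G.induce (Sᶜ : Set V)).Reachable ⟨v, hv⟩ ⟨x, hx⟩

/-- walk invariant -/
lemma walk_prop' {α : Type} {H : SimpleGraph α} (P : α → Prop)
    (hP : ∀ ⦃a b⦄, H.Adj a b → P a → P b) :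
    ∀ {a b : α}, H.Walk a b → P a → P b := by
  intro a b p
  induction p with
  | nil => exact id
  | cons h q ih => exact fun ha => ih (hP h ha)

lemma lift_reach' {α W : Type} {H : SimpleGraph α} (R : W → W → Prop)
    (htrans : ∀ {x y z : W}, R x y → R y z → R x z) (f : α → W) (P : α → Prop)
    (hP : ∀ ⦃a b⦄, H.Adj a b → P a → P b)
    (hrefl : ∀ a, P a → R (f a) (f a))
    (hadj : ∀ ⦃a b⦄, H.Adj a b → P a → R (f a) (f b)) :
    ∀ {a b : α}, H.Walk a b → P a → R (f a) (f b) ∧ P b := by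
  intro a b p
  induction p with
  | nil => exact fun h => ⟨hrefl _ h, h⟩
  | cons h q ih =>
    intro ha
    obtain ⟨r, hb⟩ := ih (hP h ha)
    exact ⟨htrans (hadj h ha) r, hb⟩

noncomputable def projFn {V : Type} (G : SimpleGraph V) (B : Set V) (v s : V) : V :=
  if hs : s ∈ (Bᶜ : Set V) then
    if h : ∃ w, w ∈ compNbrs G B ((G.induce (Bᶜ : Set V)).connectedComponentMk ⟨s, hs⟩) ∧ w ≠ v
    then h.choose else s
  else s

lemma projFn_of_mem {V : Type} (G : SimpleGraph V) (B : Set V) (v s : V) (hs : s ∈ B) :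
    projFn G B v s = s := by
  unfold projFn
  rw [dif_neg (by simp [hs])]

lemma projFn_spec {V : Type} (G : SimpleGraph V) (B : Set V) (v s : V)
    (hs : s ∈ (Bᶜ : Set V)) (w : V)
    (hw : w ∈ compNbrs G B ((G.induce (Bᶜ : Set V)).connectedComponentMk ⟨s, hs⟩))
    (hwv : w ≠ v) :
    projFn G B v s ∈ compNbrs G B ((G.induce (Bᶜ : Set V)).connectedComponentMk ⟨s, hs⟩) ∧
      projFn G B v s ≠ v := by
  unfold projFn
  rw [dif_pos hs, dif_pos ⟨w, hw, hwv⟩]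
  exact (⟨w, hw, hwv⟩ : ∃ w, _ ∧ w ≠ v).choose_spec

noncomputable def projSet {V : Type} (G : SimpleGraph V) (B : Set V) (v : V) (S : Set V) :
    Set V := (projFn G B v '' S) ∩ B

lemma projSet_ncard {V : Type} [Fintype V] (G : SimpleGraph V) (B : Set V) (v : V)
    (S : Set V) (hS : S.ncard ≤ 2) : (projSet G B v S).ncard ≤ 2 := by
  calc (projSet G B v S).ncard ≤ (projFn G B v '' S).ncard :=
        Set.ncard_le_ncard Set.inter_subset_left (Set.toFinite _)
    _ ≤ S.ncard := Set.ncard_image_le (Set.toFinite _)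
    _ ≤ 2 := hS

lemma inter_subset_projSet {V : Type} (G : SimpleGraph V) (B : Set V) (v : V) (S : Set V) :
    S ∩ B ⊆ projSet G B v S := by
  rintro x ⟨hxS, hxB⟩
  exact ⟨⟨x, hxS, projFn_of_mem G B v x hxB⟩, hxB⟩

lemma v_not_mem_projSet {V : Type} (G : SimpleGraph V) (B : Set V) (v : V) (S : Set V)
    (hv : v ∉ S) : v ∉ projSet G B v S := by
  rintro ⟨⟨s, hsS, hps⟩, hvB⟩
  by_cases hs : s ∈ B
  · rw [projFn_of_mem G B v s hs] at hps; exact hv (hps ▸ hsS)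
  · have hs' : s ∈ (Bᶜ : Set V) := hs
    unfold projFn at hps
    rw [dif_pos hs'] at hps
    split_ifs at hps with h
    · exact h.choose_spec.2 hps
    · exact hs (hps ▸ hvB)

/-- Key: if `u ≠ w` both lie in `N(C)` and avoid the projected set, then no vertex of `S`
lies in the component `C`. -/
lemma comp_avoid {V : Type} [Fintype V] (G : SimpleGraph V) (B : Set V)
    (hadh : ∀ C, (compNbrs G B C).ncard ≤ 2) (v : V) (S : Set V)
    (C : (G.induce (Bᶜ : Set V)).ConnectedComponent) (u w : V)
    (hu : u ∈ compNbrs G B C) (hw : w ∈ compNbrs G B C) (huw : u ≠ w)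
    (hu' : u ∉ projSet G B v S) (hw' : w ∉ projSet G B v S)
    (s : V) (hsS : s ∈ S) (hs : s ∈ (Bᶜ : Set V)) :
    (G.induce (Bᶜ : Set V)).connectedComponentMk ⟨s, hs⟩ ≠ C := by
  intro hC
  have heq : ({u, w} : Set V) = compNbrs G B C := by
    apply Set.eq_of_subset_of_ncard_le
    · rintro x (rfl | rfl); exacts [hu, hw]
    · rw [Set.ncard_pair huw]; exact hadh C
    · exact Set.toFinite _
  -- one of u, w is different from v
  have hex : ∃ w', w' ∈ compNbrs G B ((G.induce (Bᶜ : Set V)).connectedComponentMk ⟨s, hs⟩)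
      ∧ w' ≠ v := by
    rw [hC, ← heq]
    rcases eq_or_ne u v with rfl | h
    · exact ⟨w, Or.inr rfl, fun h => huw h.symm⟩
    · exact ⟨u, Or.inl rfl, h⟩
  obtain ⟨w', hw'2, hv'⟩ := hex
  have hspec := projFn_spec G B v s hs w' hw'2 hv'
  rw [hC] at hspec
  have hmem : projFn G B v s ∈ projSet G B v S :=
    ⟨⟨s, hsS, rfl⟩, hspec.1.1⟩
  have : projFn G B v s ∈ ({u, w} : Set V) := heq ▸ hspec.1
  rcases this with rfl | rfl
  exacts [hu' hmem, hw' hmem]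

def RR {V : Type} (G : SimpleGraph V) (S : Set V) (x y : V) : Prop :=
  ∃ (hx : x ∈ (Sᶜ : Set V)) (hy : y ∈ (Sᶜ : Set V)),
    (G.induce (Sᶜ : Set V)).Reachable ⟨x, hx⟩ ⟨y, hy⟩

lemma RR_trans {V : Type} {G : SimpleGraph V} {S : Set V} {x y z : V}
    (h1 : RR G S x y) (h2 : RR G S y z) : RR G S x z := by
  obtain ⟨hx, hy, r1⟩ := h1
  obtain ⟨hy', hz, r2⟩ := h2
  exact ⟨hx, hz, r1.trans r2⟩

lemma RR_adj {V : Type} {G : SimpleGraph V} {S : Set V} {x y : V}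
    (hx : x ∉ S) (hy : y ∉ S) (h : G.Adj x y) : RR G S x y :=
  ⟨hx, hy, SimpleGraph.Adj.reachable h⟩

lemma RR_refl {V : Type} {G : SimpleGraph V} {S : Set V} {x : V} (hx : x ∉ S) :
    RR G S x x := ⟨hx, hx, SimpleGraph.Reachable.refl _⟩

/-- Realise a torso edge coming from a component as a path in `G - S`. -/
lemma realize_comp {V : Type} [Fintype V] (G : SimpleGraph V) (B : Set V)
    (hadh : ∀ C, (compNbrs G B C).ncard ≤ 2) (v : V) (S : Set V)
    (C : (G.induce (Bᶜ : Set V)).ConnectedComponent) (u w : V)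
    (hu : u ∈ compNbrs G B C) (hw : w ∈ compNbrs G B C) (huw : u ≠ w)
    (hu' : u ∉ projSet G B v S) (hw' : w ∉ projSet G B v S) :
    RR G S u w := by
  have hnotS : ∀ x : (Bᶜ : Set V),
      (G.induce (Bᶜ : Set V)).connectedComponentMk x = C → ↑x ∉ S := by
    intro x hx hxS
    exact comp_avoid G B hadh v S C u w hu hw huw hu' hw' ↑x hxS x.2
      (by rwa [Subtype.eta]) 
  have huS : u ∉ S := fun h => hu' (inter_subset_projSet _ _ _ _ ⟨h, hu.1⟩)
  have hwS : w ∉ S := fun h => hw' (inter_subset_projSet _ _ _ _ ⟨h, hw.1⟩)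
  obtain ⟨huB, yu, hyuC, hadju⟩ := hu
  obtain ⟨hwB, yw, hywC, hadjw⟩ := hw
  have h1 : RR G S u ↑yu := RR_adj huS (hnotS yu hyuC) hadju
  have h3 : RR G S ↑yw w := RR_adj (hnotS yw hywC) hwS hadjw.symm
  have hr : (G.induce (Bᶜ : Set V)).Reachable yu yw :=
    SimpleGraph.ConnectedComponent.eq.mp (hyuC.trans hywC.symm)
  obtain ⟨p⟩ := hr
  have h2 := (lift_reach' (RR G S) RR_trans Subtype.val
      (fun a => (G.induce (Bᶜ : Set V)).connectedComponentMk a = C)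
      (fun a b hab ha =>
        (SimpleGraph.ConnectedComponent.eq.mpr hab.reachable).symm.trans ha)
      (fun a ha => RR_refl (hnotS a ha))
      (fun a b hab ha => RR_adj (hnotS a ha)
        (hnotS b ((SimpleGraph.ConnectedComponent.eq.mpr hab.reachable).symm.trans ha)) hab)
      p hyuC).1
  exact RR_trans (RR_trans h1 h2) h3

/-- **Characterisation of proper blocks.** If `B` is a proper block of `G` and
`b₁, b₂, b₃ ∈ B` are pairwise distinct, then `B` is exactly the set of all
vertices `v` such that no set `S ⊆ V(G) \ {v}` of cardinality at most 2
separates `v` from `{b₁, b₂, b₃}`. -/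
theorem properBlock_characterisation {V : Type} [Fintype V] (G : SimpleGraph V)
    (B : Set V) (hB : IsProperBlock G B) (b₁ b₂ b₃ : V)
    (hb₁ : b₁ ∈ B) (hb₂ : b₂ ∈ B) (hb₃ : b₃ ∈ B)
    (h12 : b₁ ≠ b₂) (h13 : b₁ ≠ b₃) (h23 : b₂ ≠ b₃) :
    B = {v : V | ∀ S : Set V, S.ncard ≤ 2 →
      ¬ SeparatesFrom G S v {b₁, b₂, b₃}} := by
  have hadh : ∀ C, (compNbrs G B C).ncard ≤ 2 := hB.2
  ext v
  simp only [Set.mem_setOf_eq]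
  constructor
  · -- v ∈ B : no small set separates v from the b's
    intro hvB S hS hsep
    obtain ⟨hvS', hsep⟩ := hsep
    have hvS : v ∉ S := hvS'
    set S' := projSet G B v S with hS'def
    have hS' : S'.ncard ≤ 2 := projSet_ncard G B v S hS
    have hv' : v ∉ S' := v_not_mem_projSet G B v S hvS
    -- choose a b_i not in S'
    have hbex : ∃ b, b ∈ ({b₁, b₂, b₃} : Set V) ∧ b ∈ B ∧ b ∉ S' := by
      by_contra hc
      push_neg at hc
      have hsub : ({b₁, b₂, b₃} : Set V) ⊆ S' := by
        rintro x (rfl | rfl | rfl)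
        · exact hc _ (Set.mem_insert _ _) hb₁
        · exact hc _ (Set.mem_insert_of_mem _ (Set.mem_insert _ _)) hb₂
        · exact hc _ (Set.mem_insert_of_mem _ (Set.mem_insert_of_mem _ rfl)) hb₃
      have h3 : ({b₁, b₂, b₃} : Set V).ncard = 3 := by
        rw [Set.ncard_insert_of_notMem (by simp [h12, h13]), Set.ncard_pair h23]
      have := Set.ncard_le_ncard hsub (Set.toFinite _)
      omega
    obtain ⟨b, hbmem, hbB, hb'⟩ := hbex
    have hbS : b ∉ S := fun h => hb' (inter_subset_projSet G B v S ⟨h, hbB⟩)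
    -- connectivity of the torso minus S'
    set T' : Set (B : Set V) := Subtype.val ⁻¹' S' with hT'def
    have hT' : T'.ncard ≤ 2 := by
      have himg : Subtype.val '' T' = B ∩ S' := Subtype.image_preimage_coe _ _
      have := Set.ncard_image_of_injective T' Subtype.val_injective
      rw [himg] at this
      rw [← this]
      exact le_trans (Set.ncard_le_ncard Set.inter_subset_right (Set.toFinite _)) hS'
    have hconn : ((torso G B).induce (T'ᶜ : Set (B : Set V))).Connected :=
      hB.1.2 T' (by omega)
    have hvT : (⟨v, hvB⟩ : (B : Set V)) ∈ (T'ᶜ : Set (B : Set V)) := hv'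
    have hbT : (⟨b, hbB⟩ : (B : Set V)) ∈ (T'ᶜ : Set (B : Set V)) := hb'
    obtain ⟨p⟩ := hconn.preconnected ⟨⟨v, hvB⟩, hvT⟩ ⟨⟨b, hbB⟩, hbT⟩
    have hnot : ∀ a : (T'ᶜ : Set (B : Set V)), ((a : (B : Set V)) : V) ∉ S' := fun a => a.2
    have hnotS : ∀ a : (T'ᶜ : Set (B : Set V)), ((a : (B : Set V)) : V) ∉ S :=
      fun a h => hnot a (inter_subset_projSet G B v S ⟨h, (a : (B : Set V)).2⟩)
    have key := (lift_reach' (RR G S) RR_trans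
        (fun a : (T'ᶜ : Set (B : Set V)) => ((a : (B : Set V)) : V))
        (fun _ => True) (fun _ _ _ _ => trivial)
        (fun a _ => RR_refl (hnotS a))
        (fun a c hac _ => by
          obtain ⟨hne, hcase⟩ := hac
          rcases hcase with hadj | ⟨C, h1, h2⟩
          · exact RR_adj (hnotS a) (hnotS c) hadj
          · exact realize_comp G B hadh v S C _ _ h1 h2
              (fun h => hne (Subtype.ext h)) (hnot a) (hnot c))
        p trivial).1
    obtain ⟨hv1, hb1, r⟩ := key
    exact hsep b hbmem hb1 r
  · -- conversely
    intro h
    by_contra hvB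
    have hv : v ∈ (Bᶜ : Set V) := hvB
    set C := (G.induce (Bᶜ : Set V)).connectedComponentMk ⟨v, hv⟩ with hCdef
    set S := compNbrs G B C with hSdef
    refine h S (hadh C) ⟨fun hvS => hvB hvS.1, ?_⟩
    intro x hx hx' hr
    obtain ⟨p⟩ := hr
    have hstep : ∀ ⦃a c : (Sᶜ : Set V)⦄, (G.induce (Sᶜ : Set V)).Adj a c →
        (∃ h : (↑a : V) ∈ (Bᶜ : Set V), (G.induce (Bᶜ : Set V)).connectedComponentMk ⟨↑a, h⟩ = C) →
        (∃ h : (↑c : V) ∈ (Bᶜ : Set V), (G.induce (Bᶜ : Set V)).connectedComponentMk ⟨↑c, h⟩ = C) := by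
      rintro a c hac ⟨ha', hCa⟩
      have hcB : (↑c : V) ∈ (Bᶜ : Set V) := by
        by_contra hcB'
        have hcB2 : (↑c : V) ∈ B := Set.notMem_compl_iff.mp hcB'
        have : (↑c : V) ∈ S := ⟨hcB2, ⟨⟨↑a, ha'⟩, hCa, hac.symm⟩⟩
        exact c.2 this
      refine ⟨hcB, ?_⟩
      have hadjBc : (G.induce (Bᶜ : Set V)).Adj ⟨↑a, ha'⟩ ⟨↑c, hcB⟩ := hac
      exact (SimpleGraph.ConnectedComponent.eq.mpr hadjBc.reachable).symm.trans hCa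
    have hfin := walk_prop' _ hstep p ⟨hv, rfl⟩
    obtain ⟨hxB, -⟩ := hfin
    apply hxB
    rcases hx with rfl | rfl | rfl
    exacts [hb₁, hb₂, hb₃]
end
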